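/- arXiv:2408.07771 — 2 statements merged into one kernel-verified Lean document; each statement's English description precedes it below -/
import Mathlib

section
/- Let k ≥ 2, let a_1, …, a_k be unit vectors in a real inner product space with ⟨a_i, a_j⟩ = -1/(k-1) for all i ≠ j, let n ≥ 1, let w : Fin n × Fin n → ℝ be a family of weights, and let σ : Fin n → Fin k be an assignment of the n points into k clusters. Then ∑_{i<j, σ(i) ≠ σ(j)} w_{ij} = ((k-1)/k) · ∑_{i<j} w_{ij} (1 - ⟨a_{σ(i)}, a_{σ(j)}⟩). In particular, the Max k-Cut problem of maximizing the left-hand side over all assignments σ is equivalent to maximizing the right-hand side over all choices y_i ∈ {a_1, …, a_k}. -/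
open scoped RealInnerProductSpace
open Finset

/-- The cut value of an assignment `σ` equals the Max k-Cut objective evaluated at the
simplex vectors `y i = a (σ i)`; hence the Max k-Cut problem is equivalent to maximizing
the vector objective over choices `y i ∈ {a 1, …, a k}`. -/
theorem cut_eq_simplex_objective
    {E : Type*} [NormedAddCommGroup E] [InnerProductSpace ℝ E]
    (k : ℕ) (hk : 2 ≤ k) (a : Fin k → E)
    (hunit : ∀ i, ‖a i‖ = 1)
    (hinner : ∀ i j, i ≠ j → ⟪a i, a j⟫ = -1 / ((k : ℝ) - 1))
    (n : ℕ) (hn : 1 ≤ n) (w : Fin n × Fin n → ℝ) (σ : Fin n → Fin k) :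
    ∑ p ∈ univ.filter (fun p : Fin n × Fin n => p.1 < p.2 ∧ σ p.1 ≠ σ p.2), w p
      = (((k : ℝ) - 1) / k) *
        ∑ p ∈ univ.filter (fun p : Fin n × Fin n => p.1 < p.2),
          w p * (1 - ⟪a (σ p.1), a (σ p.2)⟫) := by
  have hk1 : (k : ℝ) - 1 ≠ 0 := by
    have : (2 : ℝ) ≤ (k : ℝ) := by exact_mod_cast hk
    linarith
  have hk0 : (k : ℝ) ≠ 0 := by
    have : (2 : ℝ) ≤ (k : ℝ) := by exact_mod_cast hk
    linarith
  have hstep : ∀ p : Fin n × Fin n,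
      w p * (1 - ⟪a (σ p.1), a (σ p.2)⟫)
        = if σ p.1 ≠ σ p.2 then w p * ((k : ℝ) / ((k : ℝ) - 1)) else 0 := by
    intro p
    by_cases h : σ p.1 = σ p.2
    · simp [h, real_inner_self_eq_norm_sq, hunit]
    · rw [if_pos h, hinner _ _ h]
      field_simp
      ring
  calc ∑ p ∈ univ.filter (fun p : Fin n × Fin n => p.1 < p.2 ∧ σ p.1 ≠ σ p.2), w p
      = ∑ p ∈ univ.filter (fun p : Fin n × Fin n => p.1 < p.2),
          if σ p.1 ≠ σ p.2 then w p else 0 := by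
        rw [Finset.sum_filter, Finset.sum_filter]
        apply Finset.sum_congr rfl
        intro p _
        by_cases h1 : p.1 < p.2 <;> by_cases h2 : σ p.1 ≠ σ p.2 <;> simp [h1, h2]
    _ = (((k : ℝ) - 1) / k) *
        ∑ p ∈ univ.filter (fun p : Fin n × Fin n => p.1 < p.2),
          w p * (1 - ⟪a (σ p.1), a (σ p.2)⟫) := by
        rw [Finset.mul_sum]
        apply Finset.sum_congr rfl
        intro p _
        rw [hstep p]
        by_cases h : σ p.1 ≠ σ p.2
        · rw [if_pos h, if_pos h]
          field_simp
        · simp [h]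
end

section
/- Let k ≥ 2, n ≥ 1, let w : Fin n × Fin n → ℝ be weights, and let σ : Fin n → Fin k be any assignment. Then there exist unit vectors v_1, …, v_n in the Euclidean space ℝ^{k-1} with ⟨v_i, v_j⟩ ≥ -1/(k-1) for all i ≠ j such that ((k-1)/k) · ∑_{i<j} w_{ij} (1 - ⟨v_i, v_j⟩) = ∑_{i<j, σ(i) ≠ σ(j)} w_{ij}. Consequently, the cut value of every assignment is at most the supremum of the relaxed objective ((k-1)/k) ∑_{i<j} w_{ij}(1 - ⟨v_i, v_j⟩) over all families of unit vectors satisfying the constraints ⟨v_i, v_j⟩ ≥ -1/(k-1) for i ≠ j. -/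
open scoped RealInnerProductSpace
open Finset

lemma exists_simplex_vectors (k : ℕ) (hk : 2 ≤ k) :
    ∃ a : Fin k → EuclideanSpace ℝ (Fin (k - 1)),
      (∀ j, ‖a j‖ = 1) ∧ (∀ i j, i ≠ j → ⟪a i, a j⟫ = -1 / ((k : ℝ) - 1)) := by
  have hk0 : (0:ℝ) < k := by positivity
  have hk1 : (0:ℝ) < (k:ℝ) - 1 := by
    have : (2:ℝ) ≤ k := by exact_mod_cast hk
    linarith
  set u : EuclideanSpace ℝ (Fin k) := WithLp.toLp 2 (fun _ => 1) with hu_def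
  have hu : u ≠ 0 := by
    intro h
    have := congrArg (fun x : EuclideanSpace ℝ (Fin k) => x ⟨0, by omega⟩) h
    simp [hu_def] at this
  have huu : ⟪u, u⟫ = (k:ℝ) := by
    rw [hu_def, PiLp.inner_apply]; simp
  have hsing_u : ∀ j : Fin k, ⟪EuclideanSpace.single j (1:ℝ), u⟫ = 1 := by
    intro j
    rw [EuclideanSpace.inner_single_left]
    simp [hu_def]
  have hu_sing : ∀ j : Fin k, ⟪u, EuclideanSpace.single j (1:ℝ)⟫ = 1 := by
    intro j
    rw [EuclideanSpace.inner_single_right]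
    simp [hu_def]
  set b : Fin k → EuclideanSpace ℝ (Fin k) :=
    fun j => EuclideanSpace.single j 1 - ((1:ℝ)/k) • u with hb_def
  have hbb : ∀ i j, ⟪b i, b j⟫ = (if i = j then 1 else 0) - 1/(k:ℝ) := by
    intro i j
    rw [hb_def]
    simp only [inner_sub_left, inner_sub_right, inner_smul_left, inner_smul_right,
      EuclideanSpace.inner_single_left, EuclideanSpace.inner_single_right, huu,
      hsing_u, hu_sing]
    simp only [EuclideanSpace.single_apply, map_one, RCLike.star_def, conj_trivial, one_mul,
      map_div₀, map_one, map_natCast]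
    have hkne : (k:ℝ) ≠ 0 := ne_of_gt hk0
    by_cases h : i = j
    · simp [h]; field_simp; norm_num
    · simp [h, (Ne.symm h : ¬ j = i)]; field_simp; norm_num
  have hmem : ∀ j, b j ∈ (ℝ ∙ u)ᗮ := by
    intro j
    rw [Submodule.mem_orthogonal_singleton_iff_inner_right]
    rw [hb_def]
    simp only [inner_sub_right, inner_smul_right, huu, hu_sing]
    have hkne : (k:ℝ) ≠ 0 := ne_of_gt hk0
    field_simp; norm_num
  haveI : Fact (Module.finrank ℝ (EuclideanSpace ℝ (Fin k)) = (k-1) + 1) :=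
    ⟨by simp [finrank_euclideanSpace]; omega⟩
  have hdim : Module.finrank ℝ ((ℝ ∙ u)ᗮ) = k - 1 :=
    Submodule.finrank_orthogonal_span_singleton hu
  let φ : ((ℝ ∙ u)ᗮ) ≃ₗᵢ[ℝ] EuclideanSpace ℝ (Fin (k-1)) :=
    (stdOrthonormalBasis ℝ ((ℝ ∙ u)ᗮ)).repr.trans
      (LinearIsometryEquiv.piLpCongrLeft 2 ℝ ℝ (finCongr hdim))
  set s : ℝ := Real.sqrt ((k:ℝ)/((k:ℝ)-1)) with hs_def
  have hs_sq : s * s = (k:ℝ)/((k:ℝ)-1) := Real.mul_self_sqrt (by positivity)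
  refine ⟨fun j => φ (s • ⟨b j, hmem j⟩), ?_, ?_⟩
  · intro j
    have h1 : ⟪φ (s • (⟨b j, hmem j⟩ : (ℝ ∙ u)ᗮ)), φ (s • (⟨b j, hmem j⟩ : (ℝ ∙ u)ᗮ))⟫ = (1:ℝ) := by
      rw [LinearIsometryEquiv.inner_map_map, inner_smul_left, inner_smul_right]
      have : ⟪(⟨b j, hmem j⟩ : (ℝ ∙ u)ᗮ), (⟨b j, hmem j⟩ : (ℝ ∙ u)ᗮ)⟫ = ⟪b j, b j⟫ := rfl
      rw [this, hbb]
      simp only [if_pos rfl, conj_trivial]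
      rw [← mul_assoc, hs_sq]
      field_simp; simp
    have h2 := real_inner_self_eq_norm_mul_norm (φ (s • (⟨b j, hmem j⟩ : (ℝ ∙ u)ᗮ)))
    nlinarith [norm_nonneg (φ (s • (⟨b j, hmem j⟩ : (ℝ ∙ u)ᗮ)))]
  · intro i j hij
    rw [LinearIsometryEquiv.inner_map_map, inner_smul_left, inner_smul_right]
    have : ⟪(⟨b i, hmem i⟩ : (ℝ ∙ u)ᗮ), (⟨b j, hmem j⟩ : (ℝ ∙ u)ᗮ)⟫ = ⟪b i, b j⟫ := rfl
    rw [this, hbb, if_neg hij]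
    simp only [conj_trivial]
    rw [← mul_assoc, hs_sq]
    field_simp
    ring

/-- Every assignment `σ` gives a feasible solution of the SDP relaxation of Max k-Cut
with the same objective value; consequently every cut value is at most the supremum of
the relaxed objective over all feasible families of unit vectors. -/
theorem cut_feasible_and_le_relaxation
    (k : ℕ) (hk : 2 ≤ k) (n : ℕ) (hn : 1 ≤ n)
    (w : Fin n × Fin n → ℝ) (σ : Fin n → Fin k) :
    (∃ v : Fin n → EuclideanSpace ℝ (Fin (k - 1)),
      (∀ i, ‖v i‖ = 1) ∧
      (∀ i j, i ≠ j → ⟪v i, v j⟫ ≥ -1 / ((k : ℝ) - 1)) ∧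
      (((k : ℝ) - 1) / k) *
          (∑ p ∈ univ.filter (fun p : Fin n × Fin n => p.1 < p.2),
            w p * (1 - ⟪v p.1, v p.2⟫))
        = ∑ p ∈ univ.filter (fun p : Fin n × Fin n => p.1 < p.2 ∧ σ p.1 ≠ σ p.2), w p) ∧
    (∑ p ∈ univ.filter (fun p : Fin n × Fin n => p.1 < p.2 ∧ σ p.1 ≠ σ p.2), w p
      ≤ sSup {x : ℝ | ∃ v : Fin n → EuclideanSpace ℝ (Fin (k - 1)),
          (∀ i, ‖v i‖ = 1) ∧
          (∀ i j, i ≠ j → ⟪v i, v j⟫ ≥ -1 / ((k : ℝ) - 1)) ∧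
          x = (((k : ℝ) - 1) / k) *
            ∑ p ∈ univ.filter (fun p : Fin n × Fin n => p.1 < p.2),
              w p * (1 - ⟪v p.1, v p.2⟫)}) := by
  obtain ⟨a, ha_norm, ha_inner⟩ := exists_simplex_vectors k hk
  have hk0 : (0:ℝ) < k := by positivity
  have hk1 : (0:ℝ) < (k:ℝ) - 1 := by
    have : (2:ℝ) ≤ k := by exact_mod_cast hk
    linarith
  set v : Fin n → EuclideanSpace ℝ (Fin (k-1)) := fun i => a (σ i) with hv_def
  have hself : ∀ i : Fin n, ⟪v i, v i⟫ = (1:ℝ) := by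
    intro i
    have := real_inner_self_eq_norm_mul_norm (v i)
    rw [ha_norm] at this
    simpa using this
  have hsame : ∀ i j : Fin n, σ i = σ j → ⟪v i, v j⟫ = (1:ℝ) := by
    intro i j h
    have : v i = v j := by simp [hv_def, h]
    rw [this]; exact hself j
  have hconstr : ∀ i j : Fin n, i ≠ j → ⟪v i, v j⟫ ≥ -1 / ((k:ℝ) - 1) := by
    intro i j hij
    by_cases h : σ i = σ j
    · rw [hsame i j h]
      have : -1 / ((k:ℝ) - 1) < 0 := by
        apply div_neg_of_neg_of_pos <;> linarith
      linarith
    · exact le_of_eq (ha_inner _ _ h).symm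
  have heq : (((k : ℝ) - 1) / k) *
          (∑ p ∈ univ.filter (fun p : Fin n × Fin n => p.1 < p.2),
            w p * (1 - ⟪v p.1, v p.2⟫))
        = ∑ p ∈ univ.filter (fun p : Fin n × Fin n => p.1 < p.2 ∧ σ p.1 ≠ σ p.2), w p := by
    have hfilt : univ.filter (fun p : Fin n × Fin n => p.1 < p.2 ∧ σ p.1 ≠ σ p.2)
        = (univ.filter (fun p : Fin n × Fin n => p.1 < p.2)).filter
            (fun p => σ p.1 ≠ σ p.2) := by
      rw [Finset.filter_filter]
    rw [hfilt, Finset.mul_sum]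
    conv_rhs => rw [Finset.sum_filter]
    apply Finset.sum_congr rfl
    intro p _
    by_cases h : σ p.1 = σ p.2
    · rw [hsame _ _ h]
      simp [h]
    · rw [ha_inner _ _ h, if_pos h]
      have hkne : (k:ℝ) ≠ 0 := ne_of_gt hk0
      have hk1ne : (k:ℝ) - 1 ≠ 0 := ne_of_gt hk1
      field_simp
      ring
  refine ⟨⟨v, fun i => ha_norm (σ i), hconstr, heq⟩, ?_⟩
  have hbdd : BddAbove {x : ℝ | ∃ v : Fin n → EuclideanSpace ℝ (Fin (k - 1)),
          (∀ i, ‖v i‖ = 1) ∧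
          (∀ i j, i ≠ j → ⟪v i, v j⟫ ≥ -1 / ((k : ℝ) - 1)) ∧
          x = (((k : ℝ) - 1) / k) *
            ∑ p ∈ univ.filter (fun p : Fin n × Fin n => p.1 < p.2),
              w p * (1 - ⟪v p.1, v p.2⟫)} := by
    refine ⟨(((k : ℝ) - 1) / k) *
      ∑ p ∈ univ.filter (fun p : Fin n × Fin n => p.1 < p.2), |w p| * 2, ?_⟩
    rintro x ⟨v', hn', hc', rfl⟩
    apply mul_le_mul_of_nonneg_left _ (by positivity)
    apply Finset.sum_le_sum
    intro p _
    have h1 : |⟪v' p.1, v' p.2⟫| ≤ 1 := by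
      have := abs_real_inner_le_norm (v' p.1) (v' p.2)
      rw [hn', hn'] at this
      simpa using this
    obtain ⟨hl, hr⟩ := abs_le.mp h1
    nlinarith [le_abs_self (w p), neg_abs_le (w p), abs_nonneg (w p)]
  exact heq ▸ le_csSup hbdd ⟨v, fun i => ha_norm (σ i), hconstr, rfl⟩
end
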